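/- For any B > 1, any integer m ≥ 2, and any probability vectors p = (p₁,…,p_K) and q = (q₁,…,q_K), it holds that Σ_k p_k |min{B, log(p_k/q_k)}|^m ≤ (m! ∨ B^m/(B−1)) · Σ_k p_k · min{B, log(p_k/q_k)}. -/

import Mathlib

open BigOperators

private lemma convexOn_exp_neg : ConvexOn ℝ (Set.Ici (0:ℝ)) (fun t => Real.exp (-t)) := by
  refine ⟨convex_Ici 0, ?_⟩
  intro x _ y _ a b ha hb hab
  have := convexOn_exp.2 (Set.mem_univ (-x)) (Set.mem_univ (-y)) ha hb hab
  simpa [smul_eq_mul, neg_add, mul_neg, add_comm] using this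

private lemma key_calc (B : ℝ) (hB : 1 < B) (m : ℕ) (hm : 2 ≤ m) (t : ℝ)
    (ht0 : 0 ≤ t) (htB : t ≤ B) :
    (B - 1) * t ^ m ≤ B ^ m * (t + Real.exp (-t) - 1) := by
  have hB0 : (0:ℝ) < B := by linarith
  set G : ℝ → ℝ := fun s => B ^ m * (s + Real.exp (-s) - 1) - (B - 1) * s ^ m with hGdef
  set h : ℝ → ℝ := fun s => B ^ m * (1 - Real.exp (-s)) - (B - 1) * (m * s ^ (m - 1))
    with hhdef
  have hderiv : ∀ s : ℝ, HasDerivAt G (h s) s := by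
    intro s
    have h1 : HasDerivAt (fun x : ℝ => Real.exp (-x)) (Real.exp (-s) * (-1)) s :=
      ((hasDerivAt_id s).neg).exp
    have h2 : HasDerivAt (fun x : ℝ => x + Real.exp (-x) - 1)
        (1 + Real.exp (-s) * (-1)) s := ((hasDerivAt_id s).add h1).sub_const 1
    have h3 := (h2.const_mul (B ^ m)).sub ((hasDerivAt_pow m s).const_mul (B - 1))
    rw [show h s = B ^ m * (1 + Real.exp (-s) * (-1)) - (B - 1) * (m * s ^ (m - 1)) by
      simp only [hhdef]; ring]
    exact h3
  have hG0 : G 0 = 0 := by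
    simp [hGdef, zero_pow (by omega : m ≠ 0)]
  have hGB : 0 ≤ G B := by
    have : G B = B ^ m * Real.exp (-B) := by simp [hGdef]; ring
    rw [this]; positivity
  have hh0 : h 0 = 0 := by
    simp [hhdef, zero_pow (by omega : m - 1 ≠ 0)]
  -- concavity of h on [0, ∞)
  have hconv : ConvexOn ℝ (Set.Ici (0:ℝ))
      (fun s => B ^ m * Real.exp (-s) + ((B - 1) * m) * s ^ (m - 1)) := by
    have c1 := convexOn_exp_neg.smul (le_of_lt (pow_pos hB0 m))
    have c2 := (convexOn_pow (m-1)).smul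
      (mul_nonneg (by linarith : (0:ℝ) ≤ B - 1) (Nat.cast_nonneg m))
    exact c1.add c2
  have hconc : ConcaveOn ℝ (Set.Ici (0:ℝ)) h := by
    have := ((concaveOn_const (B ^ m) (convex_Ici (0:ℝ))).add hconv.neg)
    suffices e : h = ((fun _ => B ^ m) + -fun s => B ^ m * Real.exp (-s) + ((B - 1) * m) * s ^ (m - 1)) by
      rw [e]; exact this
    funext s
    simp [hhdef]
    ring
  have hcont : ContinuousOn G Set.univ := by
    apply Continuous.continuousOn; fun_prop
  have hdiff : ∀ s : Set ℝ, DifferentiableOn ℝ G s := fun s =>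
    fun x _ => (hderiv x).differentiableAt.differentiableWithinAt
  have hderiv' : ∀ s, deriv G s = h s := fun s => (hderiv s).deriv
  -- case split
  by_cases hc : ∀ s ∈ Set.Icc (0:ℝ) t, 0 ≤ h s
  · -- G monotone on [0, t]
    have hmono : MonotoneOn G (Set.Icc 0 t) := by
      apply monotoneOn_of_deriv_nonneg (convex_Icc 0 t) (hcont.mono (Set.subset_univ _))
        (hdiff _)
      intro x hx
      rw [interior_Icc] at hx
      rw [hderiv']
      exact hc x ⟨le_of_lt hx.1, le_of_lt hx.2⟩
    have := hmono (Set.left_mem_Icc.2 ht0) ⟨ht0, le_refl t⟩ ht0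
    rw [hG0] at this
    simpa [hGdef, sub_nonneg] using this
  · push_neg at hc
    obtain ⟨s, hs, hsneg⟩ := hc
    have hs0 : 0 < s := by
      rcases lt_or_eq_of_le hs.1 with h' | h'
      · exact h'
      · exfalso; rw [← h', hh0] at hsneg; linarith
    -- h ≤ 0 on [s, ∞)
    have hneg : ∀ u : ℝ, s ≤ u → h u ≤ 0 := by
      intro u hsu
      have hu0 : 0 < u := lt_of_lt_of_le hs0 hsu
      have ha : (0:ℝ) ≤ 1 - s / u := by
        rw [sub_nonneg]
        exact div_le_one_of_le₀ hsu (le_of_lt hu0)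
      have hb : (0:ℝ) ≤ s / u := by positivity
      have hab : (1 - s / u) + s / u = 1 := by ring
      have hcomb := hconc.2 (Set.mem_Ici.2 (le_refl (0:ℝ))) (Set.mem_Ici.2 (le_of_lt hu0)) ha hb hab
      have hpt : (1 - s / u) • (0:ℝ) + (s / u) • u = s := by
        rw [smul_eq_mul, smul_eq_mul, mul_zero, zero_add, div_mul_cancel₀ s (ne_of_gt hu0)]
      rw [hpt, hh0] at hcomb
      -- hcomb : (1 - s/u) • 0 + (s/u) • h u ≤ h s
      have : (s / u) * h u ≤ h s := by simpa [smul_eq_mul] using hcomb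
      by_contra hpos
      push_neg at hpos
      have hprod : 0 < s / u * h u := mul_pos (div_pos hs0 hu0) hpos
      exact absurd (lt_of_lt_of_le hprod this) (lt_asymm hsneg)
    have hst : s ≤ t := hs.2
    have hanti : AntitoneOn G (Set.Icc t B) := by
      apply antitoneOn_of_deriv_nonpos (convex_Icc t B) (hcont.mono (Set.subset_univ _))
        (hdiff _)
      intro x hx
      rw [interior_Icc] at hx
      rw [hderiv']
      exact hneg x (le_trans hst (le_of_lt hx.1))
    have := hanti (Set.left_mem_Icc.2 htB) (Set.right_mem_Icc.2 htB) htB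
    have hGt : 0 ≤ G t := le_trans hGB this
    simpa [hGdef, sub_nonneg] using hGt

private lemma scalar_bound (B : ℝ) (hB : 1 < B) (m : ℕ) (hm : 2 ≤ m) (t : ℝ) :
    |min B t| ^ m ≤
      max (Nat.factorial m : ℝ) (B ^ m / (B - 1)) * (min B t + Real.exp (-t) - 1) := by
  have hB0 : (0:ℝ) < B := by linarith
  have hB1 : (0:ℝ) < B - 1 := by linarith
  set C := max (Nat.factorial m : ℝ) (B ^ m / (B - 1)) with hC
  have hCfac : (Nat.factorial m : ℝ) ≤ C := le_max_left _ _
  have hCB : B ^ m / (B - 1) ≤ C := le_max_right _ _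
  rcases le_or_gt t 0 with ht | ht
  · -- t ≤ 0
    have hmin : min B t = t := min_eq_right (by linarith)
    rw [hmin, abs_of_nonpos ht]
    set x := -t with hx
    have hx0 : 0 ≤ x := by simp [hx]; linarith
    -- exp x ≥ 1 + x + x^m / m!
    have hsum := Real.sum_le_exp_of_nonneg hx0 (m+1)
    have hsub : ({0, 1, m} : Finset ℕ) ⊆ Finset.range (m+1) := by
      intro i hi
      simp only [Finset.mem_insert, Finset.mem_singleton] at hi
      rcases hi with h | h | h <;> simp [h] <;> omega
    have hterm : ∀ i ∈ Finset.range (m+1), i ∉ ({0,1,m} : Finset ℕ) →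
        (0:ℝ) ≤ x ^ i / i.factorial := by
      intro i _ _; positivity
    have h3 : ∑ i ∈ ({0,1,m} : Finset ℕ), x ^ i / i.factorial ≤
        ∑ i ∈ Finset.range (m+1), x ^ i / i.factorial :=
      Finset.sum_le_sum_of_subset_of_nonneg hsub hterm
    have hset : ∑ i ∈ ({0,1,m} : Finset ℕ), x ^ i / (i.factorial : ℝ)
        = 1 + x + x ^ m / m.factorial := by
      rw [Finset.sum_insert (by simp; omega), Finset.sum_insert (by simp; omega),
        Finset.sum_singleton]
      simp
      ring
    have hexp : 1 + x + x ^ m / m.factorial ≤ Real.exp x := by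
      rw [← hset]; exact le_trans h3 hsum
    have hfac0 : (0:ℝ) < (m.factorial : ℝ) := by positivity
    have hphi : x ^ m / m.factorial ≤ t + Real.exp (-t) - 1 := by
      have : Real.exp (-t) = Real.exp x := by rw [hx]
      rw [this]; linarith
    have hphi0 : 0 ≤ t + Real.exp (-t) - 1 := le_trans (by positivity) hphi
    calc (-t) ^ m = x ^ m := by rw [hx]
      _ ≤ (m.factorial : ℝ) * (t + Real.exp (-t) - 1) := by
          rw [div_le_iff₀ hfac0] at hphi
          linarith [hphi]
      _ ≤ C * (t + Real.exp (-t) - 1) := mul_le_mul_of_nonneg_right hCfac hphi0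
  · rcases le_or_gt t B with htB | htB
    · -- 0 < t ≤ B
      have hmin : min B t = t := min_eq_right htB
      rw [hmin, abs_of_nonneg (le_of_lt ht)]
      have hphi0 : 0 ≤ t + Real.exp (-t) - 1 := by
        have := Real.add_one_le_exp (-t); linarith
      have hkey := key_calc B hB m hm t (le_of_lt ht) htB
      have : t ^ m ≤ B ^ m / (B - 1) * (t + Real.exp (-t) - 1) := by
        rw [div_mul_eq_mul_div, le_div_iff₀ hB1]
        nlinarith
      exact le_trans this (mul_le_mul_of_nonneg_right hCB hphi0)
    · -- t > B
      have hmin : min B t = B := min_eq_left (le_of_lt htB)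
      rw [hmin, abs_of_pos hB0]
      have hphi : B - 1 ≤ B + Real.exp (-t) - 1 := by
        have := Real.exp_pos (-t); linarith
      calc B ^ m = B ^ m / (B - 1) * (B - 1) := by field_simp
        _ ≤ C * (B + Real.exp (-t) - 1) := by
            apply mul_le_mul hCB hphi (by linarith) (le_trans (by positivity) hCB)

/-- For `B > 1`, `m ≥ 2`, and probability vectors `p`, `q`:
`Σ_k p_k |min{B, log(p_k/q_k)}|^m ≤ (m! ∨ B^m/(B−1)) Σ_k p_k min{B, log(p_k/q_k)}`. -/
theorem truncated_kl_moment_bound (K : ℕ) (B : ℝ) (hB : 1 < B) (m : ℕ) (hm : 2 ≤ m)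
    (p q : Fin K → ℝ)
    (hp0 : ∀ k, 0 ≤ p k) (hp1 : ∑ k, p k = 1)
    (hq0 : ∀ k, 0 ≤ q k) (hq1 : ∑ k, q k = 1)
    (hpq : ∀ k, 0 < p k → 0 < q k) :
    ∑ k, p k * |min B (Real.log (p k / q k))| ^ m ≤
      max (Nat.factorial m : ℝ) (B ^ m / (B - 1)) * ∑ k, p k * min B (Real.log (p k / q k)) := by
  set C := max (Nat.factorial m : ℝ) (B ^ m / (B - 1)) with hC
  have hC0 : 0 < C := lt_of_lt_of_le (by exact_mod_cast m.factorial_pos) (le_max_left _ _)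
  have hpt : ∀ k, p k * |min B (Real.log (p k / q k))| ^ m ≤
      C * (p k * min B (Real.log (p k / q k)) + q k - p k) := by
    intro k
    rcases eq_or_lt_of_le (hp0 k) with h0 | h0
    · rw [← h0]
      simp only [zero_mul, mul_zero, zero_add, sub_zero, zero_add]
      have : (0:ℝ) ≤ C * q k := mul_nonneg (le_of_lt hC0) (hq0 k)
      simpa using this
    · have hq0k : 0 < q k := hpq k h0
      set t := Real.log (p k / q k) with htdef
      have hqe : q k = p k * Real.exp (-t) := by
        rw [htdef, Real.exp_neg, Real.exp_log (div_pos h0 hq0k)]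
        field_simp
      have hs := scalar_bound B hB m hm t
      calc p k * |min B t| ^ m
          ≤ p k * (C * (min B t + Real.exp (-t) - 1)) :=
            mul_le_mul_of_nonneg_left hs (le_of_lt h0)
        _ = C * (p k * min B t + q k - p k) := by rw [hqe]; ring
  calc ∑ k, p k * |min B (Real.log (p k / q k))| ^ m
      ≤ ∑ k, C * (p k * min B (Real.log (p k / q k)) + q k - p k) :=
        Finset.sum_le_sum (fun k _ => hpt k)
    _ = C * ∑ k, p k * min B (Real.log (p k / q k)) := by
        rw [← Finset.mul_sum]
        congr 1
        rw [Finset.sum_sub_distrib, Finset.sum_add_distrib, hp1, hq1]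
        ring
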